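/- Let s₁, s₂ be coprime positive integers and let S be a numerical semigroup with S ⊆ ⟨s₁, s₂⟩, such that the algebra corresponding to the extension S ⊆ ⟨s₁, s₂⟩ is flat (every element of ⟨s₁, s₂⟩ has a unique representation as an element of S plus an Apéry number). Then S is either generated by a single element, or S is generated by a₁s₁ and a₂s₂ for some positive integers a₁, a₂ with a₁ ∣ s₂ and a₂ ∣ s₁. -/

import Mathlib

/-- The Apéry set of `S'` with respect to `S`. -/
def apery (S' S : Set ℕ) : Set ℕ :=
  {w | w ∈ S' ∧ ∀ s ∈ S, s ≠ 0 → ∀ w' ∈ S', w ≠ s + w'}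

namespace FlatAux

lemma mem_pair_iff {s₁ s₂ : ℕ} (x : ℕ) :
    x ∈ AddSubmonoid.closure ({s₁, s₂} : Set ℕ) ↔ ∃ a b : ℕ, a * s₁ + b * s₂ = x := by
  rw [AddSubmonoid.mem_closure_pair]
  simp only [smul_eq_mul]

lemma dvd_coeff {s₁ s₂ i a b : ℕ} (cop : Nat.Coprime s₁ s₂)
    (h : i * s₁ = a * s₁ + b * s₂) : s₁ ∣ b := by
  have h1 : (s₁ : ℤ) ∣ (b : ℤ) * (s₂ : ℤ) := by
    refine ⟨(i : ℤ) - a, ?_⟩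
    have h' : (i : ℤ) * s₁ = a * s₁ + b * s₂ := by exact_mod_cast h
    linear_combination -h'
  have h2 : s₁ ∣ b * s₂ := by exact_mod_cast h1
  exact cop.dvd_of_dvd_mul_right h2

lemma not_decomp {s₁ s₂ d i γ₁ γ₂ c₁ c₂ : ℕ} (cop : Nat.Coprime s₁ s₂)
    (h1 : 0 < s₁) (hilt : i * s₁ < s₁ * s₂)
    (hkey : ∀ γ, 0 < γ → d ∣ γ * s₁ → i < γ)
    (hd : d ∣ γ₁ * s₁ + γ₂ * s₂) (hne : γ₁ * s₁ + γ₂ * s₂ ≠ 0) :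
    i * s₁ ≠ (γ₁ * s₁ + γ₂ * s₂) + (c₁ * s₁ + c₂ * s₂) := by
  intro h
  have h' : i * s₁ = (γ₁ + c₁) * s₁ + (γ₂ + c₂) * s₂ := by
    rw [Nat.add_mul, Nat.add_mul]; omega
  have hb : s₁ ∣ (γ₂ + c₂) := dvd_coeff cop h'
  have hzero : γ₂ + c₂ = 0 := by
    by_contra hp
    have h3 : s₁ ≤ γ₂ + c₂ := Nat.le_of_dvd (by omega) hb
    have h4 : s₁ * s₂ ≤ (γ₂ + c₂) * s₂ := Nat.mul_le_mul_right _ h3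
    have h5 : (γ₂ + c₂) * s₂ ≤ i * s₁ := by
      rw [h']; omega
    omega
  have hγ₂ : γ₂ = 0 := by omega
  have hc₂ : c₂ = 0 := by omega
  subst hγ₂; subst hc₂
  have hi : i = γ₁ + c₁ := by
    have := h'
    simp only [Nat.zero_mul, Nat.add_zero] at this
    exact Nat.eq_of_mul_eq_mul_right h1 this
  have hγpos : 0 < γ₁ := by
    rcases Nat.eq_zero_or_pos γ₁ with h0 | h0
    · exfalso; apply hne; simp [h0]
    · exact h0
  have hd' : d ∣ γ₁ * s₁ := by simpa using hd
  have := hkey γ₁ hγpos hd'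
  omega

lemma exists_gcd (S : AddSubmonoid ℕ) (hS : ∃ s ∈ S, s ≠ 0) :
    ∃ d N : ℕ, 0 < d ∧ (∀ s ∈ S, d ∣ s) ∧ (∀ m, N ≤ m → d ∣ m → m ∈ S) := by
  obtain ⟨s₀, hs₀S, hs₀⟩ := hS
  let H : AddSubgroup ℤ :=
    { carrier := {x | ∃ u ∈ S, ∃ v ∈ S, (u : ℤ) - v = x}
      zero_mem' := ⟨0, zero_mem S, 0, zero_mem S, by simp⟩
      add_mem' := by
        rintro x y ⟨u, hu, v, hv, rfl⟩ ⟨u', hu', v', hv', rfl⟩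
        exact ⟨u + u', add_mem hu hu', v + v', add_mem hv hv', by push_cast; ring⟩
      neg_mem' := by
        rintro x ⟨u, hu, v, hv, rfl⟩
        exact ⟨v, hv, u, hu, by ring⟩ }
  obtain ⟨g, hg⟩ := Int.subgroup_cyclic H
  have hmemH : ∀ x, x ∈ H ↔ ∃ n : ℤ, n * g = x := by
    intro x
    rw [hg, AddSubgroup.mem_closure_singleton]
    simp only [zsmul_eq_mul, Int.cast_id]
  have hSH : ∀ s ∈ S, (s : ℤ) ∈ H := fun s hs => ⟨s, hs, 0, zero_mem S, by simp⟩
  have hgne : g ≠ 0 := by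
    intro h0
    obtain ⟨n, hn⟩ := (hmemH _).1 (hSH s₀ hs₀S)
    rw [h0, mul_zero] at hn
    exact hs₀ (by exact_mod_cast hn.symm)
  have hgH : g ∈ H := by
    rw [hg]; exact AddSubgroup.subset_closure rfl
  obtain ⟨u, hu, v, hv, huv⟩ := hgH
  set d := g.natAbs with hdd
  have hdpos : 0 < d := Int.natAbs_pos.2 hgne
  have hdvd : ∀ s ∈ S, d ∣ s := by
    intro s hs
    obtain ⟨n, hn⟩ := (hmemH _).1 (hSH s hs)
    have h1 : g ∣ (s : ℤ) := Dvd.intro_left n hn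
    have h2 : (d : ℤ) ∣ (s : ℤ) := (Int.natAbs_dvd).2 h1
    exact_mod_cast h2
  have hex : ∃ u' ∈ S, ∃ v' ∈ S, u' = v' + d := by
    rcases Int.natAbs_eq g with h | h
    · refine ⟨u, hu, v, hv, ?_⟩
      have : (u : ℤ) - v = (d : ℤ) := by rw [huv, h]
      omega
    · refine ⟨v, hv, u, hu, ?_⟩
      have : (u : ℤ) - v = -(d : ℤ) := by rw [huv, h]
      omega
  obtain ⟨u', hu', v', hv', huv'⟩ := hex
  refine ⟨d, v' * v', hdpos, hdvd, ?_⟩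
  intro m hm hdm
  by_cases hv0 : v' = 0
  · have hdS : d ∈ S := by
      have h := hu'; rw [huv', hv0, zero_add] at h; exact h
    obtain ⟨k, hk⟩ := hdm
    rw [hk, mul_comm]
    simpa only [smul_eq_mul] using nsmul_mem hdS k
  · have hvpos : 0 < v' := Nat.pos_of_ne_zero hv0
    have hdvdv : d ∣ v' := hdvd v' hv'
    have hr : m % v' < v' := Nat.mod_lt _ hvpos
    have hdr : d ∣ m % v' := (Nat.dvd_mod_iff hdvdv).2 hdm
    obtain ⟨l, hl⟩ := hdr
    have hlv : l < v' := by
      rcases Nat.eq_zero_or_pos l with h0 | h0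
      · omega
      · have : l ≤ d * l := Nat.le_mul_of_pos_left l hdpos
        omega
    have hvq : v' ≤ m / v' := by
      rw [Nat.le_div_iff_mul_le hvpos]
      exact hm
    obtain ⟨q', hq'⟩ : ∃ q', m / v' = l + q' := ⟨m / v' - l, by omega⟩
    have hm' : m = l * u' + q' * v' := by
      have h1 : v' * (m / v') + m % v' = m := Nat.div_add_mod m v'
      rw [hq', hl] at h1
      rw [huv', ← h1]; ring
    rw [hm']
    exact add_mem
      (by simpa only [smul_eq_mul] using nsmul_mem hu' l)
      (by simpa only [smul_eq_mul] using nsmul_mem hv' q')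

lemma gap_rep {σ₁ σ₂ n : ℕ} (h1 : 2 ≤ σ₁) (h2 : 2 ≤ σ₂) (cop : Nat.Coprime σ₁ σ₂)
    (hn : 0 < n) (hnot : ¬ ∃ x y : ℕ, x * σ₁ + y * σ₂ = n) :
    ∃ i j : ℕ, 1 ≤ i ∧ i < σ₂ ∧ 1 ≤ j ∧ j < σ₁ ∧ (i : ℤ) * σ₁ = n + j * σ₂ := by
  obtain ⟨t, -, ht⟩ := Nat.exists_mul_mod_eq_one_of_coprime cop (by omega)
  set i := t * n % σ₂ with hi_def
  have hilt : i < σ₂ := Nat.mod_lt _ (by omega)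
  have hmodeq : i * σ₁ ≡ n [MOD σ₂] := by
    calc i * σ₁ ≡ (t * n) * σ₁ [MOD σ₂] := Nat.ModEq.mul_right σ₁ (Nat.mod_modEq _ _)
    _ = n * (σ₁ * t) := by ring
    _ ≡ n * (σ₁ * t % σ₂) [MOD σ₂] := Nat.ModEq.mul_left n (Nat.mod_modEq _ _).symm
    _ = n * 1 := by rw [ht]
    _ = n := by ring
  have hdvdz : (σ₂ : ℤ) ∣ (n : ℤ) - (i * σ₁ : ℕ) := hmodeq.dvd
  by_cases hcmp : i * σ₁ ≤ n
  · exfalso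
    have hdvdn : σ₂ ∣ n - i * σ₁ := by
      have : ((n - i * σ₁ : ℕ) : ℤ) = (n : ℤ) - (i * σ₁ : ℕ) := by
        rw [Nat.cast_sub hcmp]
      have h3 : (σ₂ : ℤ) ∣ ((n - i * σ₁ : ℕ) : ℤ) := by rw [this]; exact hdvdz
      exact_mod_cast h3
    apply hnot
    refine ⟨i, (n - i * σ₁) / σ₂, ?_⟩
    rw [Nat.div_mul_cancel hdvdn]
    omega
  · push_neg at hcmp
    have hdvdn : σ₂ ∣ i * σ₁ - n := by
      have : ((i * σ₁ - n : ℕ) : ℤ) = -((n : ℤ) - (i * σ₁ : ℕ)) := by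
        rw [Nat.cast_sub hcmp.le]; ring
      have h3 : (σ₂ : ℤ) ∣ ((i * σ₁ - n : ℕ) : ℤ) := by
        rw [this]; exact dvd_neg.2 hdvdz
      exact_mod_cast h3
    set j := (i * σ₁ - n) / σ₂ with hj_def
    have hj : j * σ₂ = i * σ₁ - n := Nat.div_mul_cancel hdvdn
    have hjpos : 1 ≤ j := by
      rcases Nat.eq_zero_or_pos j with h0 | h0
      · exfalso; rw [h0] at hj; omega
      · exact h0
    have hipos : 1 ≤ i := by
      rcases Nat.eq_zero_or_pos i with h0 | h0
      · exfalso; rw [h0] at hcmp; omega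
      · exact h0
    have hjlt : j < σ₁ := by
      have hiσ : i * σ₁ < σ₂ * σ₁ := by
        have := mul_lt_mul_of_pos_right hilt (show (0:ℕ) < σ₁ by omega)
        exact this
      have : j * σ₂ < σ₁ * σ₂ := by
        rw [hj]
        calc i * σ₁ - n ≤ i * σ₁ := Nat.sub_le _ _
        _ < σ₂ * σ₁ := hiσ
        _ = σ₁ * σ₂ := by ring
      exact lt_of_mul_lt_mul_right this (Nat.zero_le _)
    refine ⟨i, j, hipos, hilt, hjpos, hjlt, ?_⟩
    have : (j : ℤ) * σ₂ = (i : ℤ) * σ₁ - n := by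
      have := hj
      have hcast : ((j * σ₂ : ℕ) : ℤ) = ((i * σ₁ - n : ℕ) : ℤ) := by exact_mod_cast this
      rw [Nat.cast_sub hcmp.le] at hcast
      push_cast at hcast ⊢
      linarith
    linarith

lemma exists_inv_cong {e σ₁ σ₂ : ℕ} (he : 2 ≤ e) (c1 : Nat.Coprime σ₁ e)
    (c2 : Nat.Coprime σ₂ e) :
    ∃ i, 1 ≤ i ∧ i < e ∧ (e : ℤ) ∣ (i : ℤ) * σ₁ - σ₂ := by
  obtain ⟨t, -, ht⟩ := Nat.exists_mul_mod_eq_one_of_coprime c1 (by omega)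
  set i := t * σ₂ % e with hi_def
  have hilt : i < e := Nat.mod_lt _ (by omega)
  have hmodeq : i * σ₁ ≡ σ₂ [MOD e] := by
    calc i * σ₁ ≡ (t * σ₂) * σ₁ [MOD e] := Nat.ModEq.mul_right σ₁ (Nat.mod_modEq _ _)
    _ = σ₂ * (σ₁ * t) := by ring
    _ ≡ σ₂ * (σ₁ * t % e) [MOD e] := Nat.ModEq.mul_left σ₂ (Nat.mod_modEq _ _).symm
    _ = σ₂ * 1 := by rw [ht]
    _ = σ₂ := by ring
  have hdvdz : (e : ℤ) ∣ (i : ℤ) * σ₁ - σ₂ := by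
    have := hmodeq.dvd
    have h3 : (e : ℤ) ∣ (σ₂ : ℤ) - (i * σ₁ : ℕ) := this
    have := dvd_neg.2 h3
    push_cast at this ⊢
    convert this using 1
    · exact rfl
    ring
  refine ⟨i, ?_, hilt, hdvdz⟩
  rcases Nat.eq_zero_or_pos i with h0 | h0
  · exfalso
    rw [h0] at hdvdz
    simp at hdvdz
    have hd1 : e ∣ σ₂ := by exact_mod_cast hdvdz
    have hd2 : e ∣ Nat.gcd σ₂ e := Nat.dvd_gcd hd1 dvd_rfl
    rw [c2] at hd2
    have := Nat.le_of_dvd one_pos hd2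
    omega
  · exact h0

end FlatAux

open FlatAux in
theorem flat_two_generators_classification (s₁ s₂ : ℕ)
    (hs₁ : 0 < s₁) (hs₂ : 0 < s₂) (hcop : Nat.Coprime s₁ s₂)
    (S : AddSubmonoid ℕ) (hsub : S ≤ AddSubmonoid.closure ({s₁, s₂} : Set ℕ))
    (hflat : ∀ x ∈ AddSubmonoid.closure ({s₁, s₂} : Set ℕ), ∃! p : ℕ × ℕ,
      p.1 ∈ S ∧
      p.2 ∈ apery (AddSubmonoid.closure ({s₁, s₂} : Set ℕ) : Set ℕ) (S : Set ℕ) ∧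
      x = p.1 + p.2) :
    (∃ g : ℕ, S = AddSubmonoid.closure ({g} : Set ℕ)) ∨
    (∃ a₁ a₂ : ℕ, 0 < a₁ ∧ 0 < a₂ ∧ a₁ ∣ s₂ ∧ a₂ ∣ s₁ ∧
      S = AddSubmonoid.closure ({a₁ * s₁, a₂ * s₂} : Set ℕ)) := by
  classical
  by_cases hbot : ∀ s ∈ S, s = 0
  · left
    refine ⟨0, ?_⟩
    ext x
    simp only [AddSubmonoid.mem_closure_singleton, smul_zero]
    constructor
    · intro hx; exact ⟨0, (hbot x hx).symm⟩
    · rintro ⟨n, rfl⟩; exact zero_mem S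
  · push_neg at hbot
    obtain ⟨d, N, hdpos, hdvd, hlarge⟩ := exists_gcd S hbot
    have h0ap : 0 ∈ apery (AddSubmonoid.closure ({s₁, s₂} : Set ℕ) : Set ℕ) (S : Set ℕ) := by
      refine ⟨zero_mem _, ?_⟩
      intro s hs hs0 w' hw' heq
      omega
    -- Violation lemma
    have violation : ∀ w w' : ℕ,
        w ∈ apery (AddSubmonoid.closure ({s₁, s₂} : Set ℕ) : Set ℕ) (S : Set ℕ) →
        w' ∈ apery (AddSubmonoid.closure ({s₁, s₂} : Set ℕ) : Set ℕ) (S : Set ℕ) →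
        w < w' → d ∣ w' - w → False := by
      intro w w' hw hw' hlt hdw
      have hs' : d * (N + 1) ∈ S := by
        refine hlarge _ ?_ ⟨N + 1, rfl⟩
        calc N ≤ 1 * (N + 1) := by omega
        _ ≤ d * (N + 1) := Nat.mul_le_mul_right _ hdpos
      have hs'' : d * (N + 1) + (w' - w) ∈ S := by
        refine hlarge _ ?_ (dvd_add ⟨N + 1, rfl⟩ hdw)
        have : N ≤ d * (N + 1) := by
          calc N ≤ 1 * (N + 1) := by omega
          _ ≤ d * (N + 1) := Nat.mul_le_mul_right _ hdpos
        omega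
      have hzT : d * (N + 1) + w' ∈ AddSubmonoid.closure ({s₁, s₂} : Set ℕ) :=
        add_mem (hsub hs') hw'.1
      obtain ⟨p, hp, huniq⟩ := hflat _ hzT
      have e1 := huniq (d * (N + 1), w') ⟨hs', hw', rfl⟩
      have e2 := huniq (d * (N + 1) + (w' - w), w) ⟨hs'', hw, by omega⟩
      have : w' = w := by
        have h12 := e1.trans e2.symm
        exact congrArg Prod.snd h12
      omega
    have hTd_sub : ∀ t, t ∈ AddSubmonoid.closure ({s₁, s₂} : Set ℕ) → d ∣ t → t ∈ S := by
      intro t ht hdt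
      obtain ⟨p, ⟨hp1, hp2, hp3⟩, -⟩ := hflat t ht
      by_cases hw0 : p.2 = 0
      · have : t = p.1 := by omega
        rw [this]; exact hp1
      · exfalso
        have hdw : d ∣ p.2 := by
          have hd1 : d ∣ p.1 := hdvd _ hp1
          have : d ∣ p.1 + p.2 := hp3 ▸ hdt
          exact (Nat.dvd_add_right hd1).1 this
        exact violation 0 p.2 h0ap hp2 (Nat.pos_of_ne_zero hw0) (by simpa using hdw)
    by_cases hdT : d ∈ AddSubmonoid.closure ({s₁, s₂} : Set ℕ)
    · left
      refine ⟨d, le_antisymm ?_ ?_⟩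
      · intro s hs
        rw [AddSubmonoid.mem_closure_singleton]
        obtain ⟨k, hk⟩ := hdvd s hs
        exact ⟨k, by rw [smul_eq_mul, mul_comm]; omega⟩
      · rw [AddSubmonoid.closure_le]
        intro x hx
        rw [Set.mem_singleton_iff] at hx
        rw [hx]
        exact hTd_sub d hdT dvd_rfl
    · set a₂ := Nat.gcd d s₁ with ha₂def
      set a₁ := Nat.gcd d s₂ with ha₁def
      have ha₂s : a₂ ∣ s₁ := Nat.gcd_dvd_right d s₁
      have ha₁s : a₁ ∣ s₂ := Nat.gcd_dvd_right d s₂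
      have ha₂d : a₂ ∣ d := Nat.gcd_dvd_left d s₁
      have ha₁d : a₁ ∣ d := Nat.gcd_dvd_left d s₂
      have ha₁pos : 0 < a₁ := Nat.gcd_pos_of_pos_left s₂ hdpos
      have ha₂pos : 0 < a₂ := Nat.gcd_pos_of_pos_left s₁ hdpos
      have hc1 : Nat.Coprime a₁ s₁ := Nat.Coprime.coprime_dvd_left ha₁s hcop.symm
      have hc2 : Nat.Coprime a₂ s₂ := Nat.Coprime.coprime_dvd_left ha₂s hcop
      have hcopa : Nat.Coprime a₁ a₂ := Nat.Coprime.coprime_dvd_right ha₂s hc1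
      have haa : a₁ * a₂ ∣ d := Nat.Coprime.mul_dvd_of_dvd_of_dvd hcopa ha₁d ha₂d
      by_cases he1 : a₁ * a₂ = d
      · right
        refine ⟨a₁, a₂, ha₁pos, ha₂pos, ha₁s, ha₂s, le_antisymm ?_ ?_⟩
        · intro s hs
          obtain ⟨b₁, b₂, hb⟩ := (mem_pair_iff s).1 (hsub hs)
          have hds : d ∣ s := hdvd s hs
          have hda₁ : a₁ ∣ s := dvd_trans ha₁d hds
          have hda₂ : a₂ ∣ s := dvd_trans ha₂d hds
          have h₁ : a₁ ∣ b₁ := by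
            have hx : a₁ ∣ b₂ * s₂ := Dvd.dvd.mul_left ha₁s b₂
            have hy : a₁ ∣ b₁ * s₁ + b₂ * s₂ := hb ▸ hda₁
            have hz : a₁ ∣ b₁ * s₁ := (Nat.dvd_add_iff_left hx).2 hy
            exact hc1.dvd_of_dvd_mul_right hz
          have h₂ : a₂ ∣ b₂ := by
            have hx : a₂ ∣ b₁ * s₁ := Dvd.dvd.mul_left ha₂s b₁
            have hy : a₂ ∣ b₁ * s₁ + b₂ * s₂ := hb ▸ hda₂
            have hz : a₂ ∣ b₂ * s₂ := (Nat.dvd_add_iff_right hx).2 hy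
            exact hc2.dvd_of_dvd_mul_right hz
          rw [mem_pair_iff]
          refine ⟨b₁ / a₁, b₂ / a₂, ?_⟩
          rw [← mul_assoc, ← mul_assoc, Nat.div_mul_cancel h₁, Nat.div_mul_cancel h₂]
          exact hb
        · rw [AddSubmonoid.closure_le]
          intro x hx
          simp only [Set.mem_insert_iff, Set.mem_singleton_iff] at hx
          rcases hx with rfl | rfl
          · apply hTd_sub
            · exact (mem_pair_iff _).2 ⟨a₁, 0, by ring⟩
            · rw [← he1]; exact mul_dvd_mul_left a₁ ha₂s
          · apply hTd_sub
            · exact (mem_pair_iff _).2 ⟨0, a₂, by ring⟩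
            · rw [← he1]
              obtain ⟨c, hc⟩ := ha₁s
              exact ⟨c, by rw [hc]; ring⟩
      · exfalso
        obtain ⟨e, hde⟩ := haa
        have he2 : 2 ≤ e := by
          rcases Nat.lt_or_ge e 2 with h | h
          · interval_cases e
            · omega
            · omega
          · exact h
        obtain ⟨σ₁, hs₁f⟩ := ha₂s
        obtain ⟨σ₂, hs₂f⟩ := ha₁s
        have hσ₁pos : 0 < σ₁ := by
          rcases Nat.eq_zero_or_pos σ₁ with h0 | h0
          · exfalso; rw [h0, mul_zero] at hs₁f; omega
          · exact h0
        have hσ₂pos : 0 < σ₂ := by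
          rcases Nat.eq_zero_or_pos σ₂ with h0 | h0
          · exfalso; rw [h0, mul_zero] at hs₂f; omega
          · exact h0
        have hσ₁2 : 2 ≤ σ₁ := by
          rcases Nat.lt_or_ge σ₁ 2 with h | h
          · exfalso
            have hσ1 : σ₁ = 1 := by omega
            rw [hσ1, mul_one] at hs₁f
            -- s₁ = a₂ ∣ d, so d ∈ T
            apply hdT
            obtain ⟨c, hc⟩ := hs₁f ▸ ha₂d
            exact (mem_pair_iff _).2 ⟨c, 0, by rw [hc]; ring⟩
          · exact h
        have hσ₂2 : 2 ≤ σ₂ := by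
          rcases Nat.lt_or_ge σ₂ 2 with h | h
          · exfalso
            have hσ1 : σ₂ = 1 := by omega
            rw [hσ1, mul_one] at hs₂f
            apply hdT
            obtain ⟨c, hc⟩ := hs₂f ▸ ha₁d
            exact (mem_pair_iff _).2 ⟨0, c, by rw [hc]; ring⟩
          · exact h
        have hσ₁dvd : σ₁ ∣ s₁ := Dvd.intro_left a₂ hs₁f.symm
        have hσ₂dvd : σ₂ ∣ s₂ := Dvd.intro_left a₁ hs₂f.symm
        have hcopσ : Nat.Coprime σ₁ σ₂ :=
          Nat.Coprime.coprime_dvd_right hσ₂dvd (Nat.Coprime.coprime_dvd_left hσ₁dvd hcop)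
        have hcopeσ₁ : Nat.Coprime σ₁ e := by
          have h1 : a₂ * Nat.gcd σ₁ e ∣ s₁ := by
            rw [hs₁f]; exact mul_dvd_mul_left a₂ (Nat.gcd_dvd_left σ₁ e)
          have h2 : a₂ * Nat.gcd σ₁ e ∣ d := by
            rw [hde, show a₁ * a₂ * e = a₂ * (a₁ * e) from by ring]
            exact mul_dvd_mul_left a₂ (Dvd.dvd.mul_left (Nat.gcd_dvd_right σ₁ e) a₁)
          have h3 : a₂ * Nat.gcd σ₁ e ∣ a₂ := by
            rw [ha₂def]; exact Nat.dvd_gcd h2 h1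
          have h4 : Nat.gcd σ₁ e ∣ 1 :=
            (Nat.mul_dvd_mul_iff_left ha₂pos).1 (by simpa using h3)
          exact Nat.dvd_one.1 h4
        have hcopeσ₂ : Nat.Coprime σ₂ e := by
          have h1 : a₁ * Nat.gcd σ₂ e ∣ s₂ := by
            rw [hs₂f]; exact mul_dvd_mul_left a₁ (Nat.gcd_dvd_left σ₂ e)
          have h2 : a₁ * Nat.gcd σ₂ e ∣ d := by
            rw [hde, show a₁ * a₂ * e = a₁ * (a₂ * e) from by ring]
            exact mul_dvd_mul_left a₁ (Dvd.dvd.mul_left (Nat.gcd_dvd_right σ₂ e) a₂)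
          have h3 : a₁ * Nat.gcd σ₂ e ∣ a₁ := by
            rw [ha₁def]; exact Nat.dvd_gcd h2 h1
          have h4 : Nat.gcd σ₂ e ∣ 1 :=
            (Nat.mul_dvd_mul_iff_left ha₁pos).1 (by simpa using h3)
          exact Nat.dvd_one.1 h4
        have key : ∃ i₀ j₀ : ℕ, 1 ≤ i₀ ∧ i₀ < σ₂ ∧ i₀ < e ∧ 1 ≤ j₀ ∧ j₀ < σ₁ ∧ j₀ < e ∧
            (e : ℤ) ∣ (i₀ : ℤ) * σ₁ - (j₀ : ℤ) * σ₂ := by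
          by_cases hca : e ≤ σ₂
          · obtain ⟨i₀, hi1, hie, hdv⟩ := exists_inv_cong he2 hcopeσ₁ hcopeσ₂
            exact ⟨i₀, 1, hi1, lt_of_lt_of_le hie hca, hie, le_refl 1, by omega, by omega,
              by simpa using hdv⟩
          · by_cases hcb : e ≤ σ₁
            · obtain ⟨j₀, hj1, hje, hdv⟩ := exists_inv_cong he2 hcopeσ₂ hcopeσ₁
              refine ⟨1, j₀, le_refl 1, by omega, by omega, hj1, lt_of_lt_of_le hje hcb, hje, ?_⟩
              have hneg := dvd_neg.2 hdv
              convert hneg using 1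
              · exact rfl
              push_cast
              ring
            · push_neg at hca hcb
              have hnotin : ¬ ∃ x y : ℕ, x * σ₁ + y * σ₂ = e := by
                rintro ⟨x, y, hxy⟩
                apply hdT
                refine (mem_pair_iff _).2 ⟨x * a₁, y * a₂, ?_⟩
                rw [hs₁f, hs₂f, hde, ← hxy]; ring
              obtain ⟨i₀, j₀, hi1, hiσ, hj1, hjσ, heq⟩ :=
                gap_rep hσ₁2 hσ₂2 hcopσ (by omega) hnotin
              exact ⟨i₀, j₀, hi1, hiσ, by omega, hj1, hjσ, by omega,
                ⟨1, by rw [mul_one]; linarith⟩⟩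
        obtain ⟨i₀, j₀, hi1, hiσ, hie, hj1, hjσ, hje, hdvde⟩ := key
        have hxT : (a₁ * i₀) * s₁ ∈ AddSubmonoid.closure ({s₁, s₂} : Set ℕ) :=
          (mem_pair_iff _).2 ⟨a₁ * i₀, 0, by ring⟩
        have hyT : (a₂ * j₀) * s₂ ∈ AddSubmonoid.closure ({s₁, s₂} : Set ℕ) :=
          (mem_pair_iff _).2 ⟨0, a₂ * j₀, by ring⟩
        have hdxy : (d : ℤ) ∣ ((a₁ * i₀) * s₁ : ℕ) - (((a₂ * j₀) * s₂ : ℕ) : ℤ) := by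
          obtain ⟨c, hc⟩ := hdvde
          refine ⟨c, ?_⟩
          push_cast [hs₁f, hs₂f, hde]
          linear_combination ((a₁ : ℤ) * (a₂ : ℤ)) * hc
        have hxs₂ : a₁ * i₀ < s₂ := by
          rw [hs₂f]
          calc a₁ * i₀ < a₁ * i₀ + a₁ := by omega
          _ = a₁ * (i₀ + 1) := by ring
          _ ≤ a₁ * σ₂ := Nat.mul_le_mul_left a₁ (by omega)
        have hys₁ : a₂ * j₀ < s₁ := by
          rw [hs₁f]
          calc a₂ * j₀ < a₂ * j₀ + a₂ := by omega
          _ = a₂ * (j₀ + 1) := by ring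
          _ ≤ a₂ * σ₁ := Nat.mul_le_mul_left a₂ (by omega)
        have hxy_ne : (a₁ * i₀) * s₁ ≠ (a₂ * j₀) * s₂ := by
          intro h
          have h1 : s₂ ∣ (a₁ * i₀) * s₁ := ⟨a₂ * j₀, by rw [h]; ring⟩
          have h2 : s₂ ∣ a₁ * i₀ := (hcop.symm).dvd_of_dvd_mul_right h1
          have h3 : s₂ ≤ a₁ * i₀ := Nat.le_of_dvd (by positivity) h2
          omega
        have hkey₁ : ∀ γ, 0 < γ → d ∣ γ * s₁ → a₁ * i₀ < γ := by
          intro γ hγ hdγ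
          rw [hde, hs₁f] at hdγ
          have h1 : a₂ * (a₁ * e) ∣ a₂ * (γ * σ₁) := by
            rw [show a₂ * (a₁ * e) = a₁ * a₂ * e from by ring,
              show a₂ * (γ * σ₁) = γ * (a₂ * σ₁) from by ring]
            exact hdγ
          have h2 : a₁ * e ∣ γ * σ₁ := (Nat.mul_dvd_mul_iff_left ha₂pos).1 h1
          have h3 : Nat.Coprime (a₁ * e) σ₁ :=
            Nat.Coprime.mul (Nat.Coprime.coprime_dvd_right hσ₁dvd hc1) hcopeσ₁.symm
          have h4 : a₁ * e ∣ γ := h3.dvd_of_dvd_mul_right h2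
          have h5 : a₁ * e ≤ γ := Nat.le_of_dvd hγ h4
          have h6 : a₁ * i₀ < a₁ * e := by
            calc a₁ * i₀ < a₁ * i₀ + a₁ := by omega
            _ = a₁ * (i₀ + 1) := by ring
            _ ≤ a₁ * e := Nat.mul_le_mul_left a₁ (by omega)
          omega
        have hkey₂ : ∀ γ, 0 < γ → d ∣ γ * s₂ → a₂ * j₀ < γ := by
          intro γ hγ hdγ
          rw [hde, hs₂f] at hdγ
          have h1 : a₁ * (a₂ * e) ∣ a₁ * (γ * σ₂) := by
            rw [show a₁ * (a₂ * e) = a₁ * a₂ * e from by ring,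
              show a₁ * (γ * σ₂) = γ * (a₁ * σ₂) from by ring]
            exact hdγ
          have h2 : a₂ * e ∣ γ * σ₂ := (Nat.mul_dvd_mul_iff_left ha₁pos).1 h1
          have h3 : Nat.Coprime (a₂ * e) σ₂ :=
            Nat.Coprime.mul (Nat.Coprime.coprime_dvd_right hσ₂dvd hc2) hcopeσ₂.symm
          have h4 : a₂ * e ∣ γ := h3.dvd_of_dvd_mul_right h2
          have h5 : a₂ * e ≤ γ := Nat.le_of_dvd hγ h4
          have h6 : a₂ * j₀ < a₂ * e := by
            calc a₂ * j₀ < a₂ * j₀ + a₂ := by omega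
            _ = a₂ * (j₀ + 1) := by ring
            _ ≤ a₂ * e := Nat.mul_le_mul_left a₂ (by omega)
          omega
        have hxap : (a₁ * i₀) * s₁ ∈
            apery (AddSubmonoid.closure ({s₁, s₂} : Set ℕ) : Set ℕ) (S : Set ℕ) := by
          refine ⟨hxT, ?_⟩
          intro s hsS hs0 w' hw'T heq
          obtain ⟨γ₁, γ₂, hγ⟩ := (mem_pair_iff s).1 (hsub hsS)
          obtain ⟨c₁, c₂, hc⟩ := (mem_pair_iff w').1 hw'T
          rw [← hγ, ← hc] at heq
          have hxlt : (a₁ * i₀) * s₁ < s₁ * s₂ := by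
            calc (a₁ * i₀) * s₁ ≤ (s₂ - 1) * s₁ := Nat.mul_le_mul_right s₁ (by omega)
            _ < s₂ * s₁ := by
                have := Nat.mul_lt_mul_of_lt_of_le (show s₂ - 1 < s₂ by omega) (le_refl s₁) hs₁
                exact this
            _ = s₁ * s₂ := by ring
          exact not_decomp hcop hs₁ hxlt hkey₁
            (by rw [hγ]; exact hdvd s hsS) (by rw [hγ]; exact hs0) heq
        have hyap : (a₂ * j₀) * s₂ ∈
            apery (AddSubmonoid.closure ({s₁, s₂} : Set ℕ) : Set ℕ) (S : Set ℕ) := by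
          refine ⟨hyT, ?_⟩
          intro s hsS hs0 w' hw'T heq
          obtain ⟨γ₁, γ₂, hγ⟩ := (mem_pair_iff s).1 (hsub hsS)
          obtain ⟨c₁, c₂, hc⟩ := (mem_pair_iff w').1 hw'T
          have heq' : (a₂ * j₀) * s₂ = (γ₂ * s₂ + γ₁ * s₁) + (c₂ * s₂ + c₁ * s₁) := by
            rw [heq, ← hγ, ← hc]; ring
          have hylt : (a₂ * j₀) * s₂ < s₂ * s₁ := by
            calc (a₂ * j₀) * s₂ ≤ (s₁ - 1) * s₂ := Nat.mul_le_mul_right s₂ (by omega)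
            _ < s₁ * s₂ := by
                have := Nat.mul_lt_mul_of_lt_of_le (show s₁ - 1 < s₁ by omega) (le_refl s₂) hs₂
                exact this
            _ = s₂ * s₁ := by ring
          exact not_decomp hcop.symm hs₂ hylt hkey₂
            (by rw [show γ₂ * s₂ + γ₁ * s₁ = γ₁ * s₁ + γ₂ * s₂ from by ring, hγ]
                exact hdvd s hsS)
            (by rw [show γ₂ * s₂ + γ₁ * s₁ = γ₁ * s₁ + γ₂ * s₂ from by ring, hγ]
                exact hs0) heq'
        rcases lt_trichotomy ((a₁ * i₀) * s₁) ((a₂ * j₀) * s₂) with hlt | hlt | hlt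
        · refine violation _ _ hxap hyap hlt ?_
          have h9 : (d : ℤ) ∣ (((a₂ * j₀) * s₂ - (a₁ * i₀) * s₁ : ℕ) : ℤ) := by
            rw [Nat.cast_sub hlt.le]
            exact dvd_sub_comm.mp hdxy
          exact_mod_cast h9
        · exact hxy_ne hlt
        · refine violation _ _ hyap hxap hlt ?_
          have h9 : (d : ℤ) ∣ (((a₁ * i₀) * s₁ - (a₂ * j₀) * s₂ : ℕ) : ℤ) := by
            rw [Nat.cast_sub hlt.le]
            exact hdxy
          exact_mod_cast h9
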